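/- Let U and V be real normed spaces, let B : U → V' be a continuous linear operator, let ℓ ∈ V', let U_n ⊆ U be a subspace, and let w be a weight function. Suppose (r, u_n) ∈ V × U_n solves the exact mixed system, i.e. the functional ℓ - Bu_n ∈ V' belongs to the duality set of weight w at r (that is, (ℓ - Bu_n)(r) = ‖r‖_V·‖ℓ - Bu_n‖_{V'} and ‖ℓ - Bu_n‖_{V'} = w(‖r‖_V)), and (Bw_n)(r) = 0 for all w_n ∈ U_n. Then u_n minimizes the residual over U_n: ‖ℓ - Bu_n‖_{V'} ≤ ‖ℓ - Bw_n‖_{V'} for all w_n ∈ U_n. -/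
import Mathlib

/-- A weight function: continuous, strictly increasing on `[0,∞)`, vanishing at `0`,
mapping `[0,∞)` into `[0,∞)`, and tending to `∞` at `∞`. -/
def IsWeightFun (φ : ℝ → ℝ) : Prop :=
  ContinuousOn φ (Set.Ici 0) ∧ StrictMonoOn φ (Set.Ici 0) ∧ φ 0 = 0 ∧
    (∀ t ∈ Set.Ici (0 : ℝ), 0 ≤ φ t) ∧ Filter.Tendsto φ Filter.atTop Filter.atTop

/-- If `(r, u_n) ∈ V × U_n` solves the exact mixed system, i.e. `ℓ - B u_n` lies in the
duality set of weight `w` at `r` and `(B w_n)(r) = 0` for all `w_n ∈ U_n`, then `u_n`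
minimizes the residual `‖ℓ - B w_n‖_{V'}` over `U_n`. -/
theorem statement13 {U V : Type*} [NormedAddCommGroup U] [NormedSpace ℝ U]
    [NormedAddCommGroup V] [NormedSpace ℝ V]
    (B : U →L[ℝ] V →L[ℝ] ℝ) (ℓ : V →L[ℝ] ℝ) (Un : Submodule ℝ U)
    (w : ℝ → ℝ) (hw : IsWeightFun w)
    (r : V) (un : U) (hun : un ∈ Un)
    (hdual₁ : (ℓ - B un) r = ‖r‖ * ‖ℓ - B un‖)
    (hdual₂ : ‖ℓ - B un‖ = w ‖r‖)
    (horth : ∀ wn ∈ Un, B wn r = 0) :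
    ∀ wn ∈ Un, ‖ℓ - B un‖ ≤ ‖ℓ - B wn‖ := by
  intro wn hwn
  rcases eq_or_ne r 0 with hr | hr
  · rw [hdual₂, hr, norm_zero, hw.2.2.1]
    exact norm_nonneg _
  · have hrpos : (0:ℝ) < ‖r‖ := norm_pos_iff.mpr hr
    have h1 : ‖r‖ * ‖ℓ - B un‖ = (ℓ - B wn) r := by
      rw [← hdual₁]
      simp [horth un hun, horth wn hwn]
    have h2 : (ℓ - B wn) r ≤ ‖ℓ - B wn‖ * ‖r‖ := by
      calc (ℓ - B wn) r ≤ ‖(ℓ - B wn) r‖ := le_abs_self _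
        _ ≤ ‖ℓ - B wn‖ * ‖r‖ := (ℓ - B wn).le_opNorm r
    nlinarith [norm_nonneg (ℓ - B wn)]
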